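/- Let p be an odd prime and let W ⊆ ℤ/pℤ be a nonempty set of residues with (3/4)^{(p−1)/2 − |W|} < 1/p. Then there exist sets U, V ⊆ ℤ/pℤ forming a prime-compatible pair modulo p with W ⊆ U and W ⊆ V. -/

import Mathlib

open Pointwise

/-- `U, V ⊆ ℤ/pℤ` form a prime-compatible pair modulo `p` if they are nonempty and
`(U \ V) - (V \ U)` is exactly the set of nonzero residues. -/
def PrimeCompatiblePair (p : ℕ) (U V : Set (ZMod p)) : Prop :=
  U.Nonempty ∧ V.Nonempty ∧ (U \ V) - (V \ U) = {0}ᶜ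

/-- If `p` is an odd prime and `W ⊆ ℤ/pℤ` is nonempty with
`(3/4) ^ ((p-1)/2 - |W|) < 1/p`, then there is a prime-compatible pair `U, V`
modulo `p` with `W ⊆ U` and `W ⊆ V`. -/
private def boolCode (x y : Bool) : Fin 3 := if x then 0 else if y then 1 else 2

private lemma boolCode_inj : ∀ x1 y1 x2 y2 : Bool,
    ¬(x1 = true ∧ y1 = false) → ¬(x2 = true ∧ y2 = false) →
    boolCode x1 y1 = boolCode x2 y2 → x1 = x2 ∧ y1 = y2 := by decide

private lemma card_pairs_le {α : Type*} [Fintype α] [DecidableEq α]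
    (G : Finset ℕ) (a b : ℕ → α)
    (hab : ∀ i ∈ G, a i ≠ b i)
    (hdisj : ∀ i ∈ G, ∀ j ∈ G, i ≠ j → Disjoint ({a i, b i} : Finset α) {a j, b j})
    (B : Finset (α → Bool))
    (hB : ∀ c ∈ B, ∀ i ∈ G, ¬(c (a i) = true ∧ c (b i) = false)) :
    B.card ≤ 3 ^ G.card * 2 ^ (Fintype.card α - 2 * G.card) := by
  classical
  set P : Finset α := G.biUnion (fun i => {a i, b i}) with hPdef
  have hPcard : P.card = 2 * G.card := by
    rw [hPdef, Finset.card_biUnion hdisj]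
    rw [Finset.sum_congr rfl (fun i hi => by
      rw [Finset.card_insert_of_notMem (by simp [hab i hi]), Finset.card_singleton]),
      Finset.sum_const, smul_eq_mul, mul_comm]
  have key := Finset.card_le_card_of_injOn
    (s := B)
    (f := fun c : α → Bool =>
      ((fun i : {i // i ∈ G} => boolCode (c (a i.1)) (c (b i.1))),
       (fun x : {x : α // x ∉ P} => c x.1)))
    (t := (Finset.univ : Finset (({i // i ∈ G} → Fin 3) × ({x : α // x ∉ P} → Bool))))
    (fun c _ => Finset.mem_univ _) ?_
  · refine key.trans_eq ?_
    rw [Finset.card_univ, Fintype.card_prod, Fintype.card_fun, Fintype.card_fun,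
      Fintype.card_coe, Fintype.card_fin, Fintype.card_bool, Fintype.card_subtype_compl,
      Fintype.card_coe, hPcard]
  · intro c1 h1 c2 h2 heq
    funext x
    by_cases hx : x ∈ P
    · obtain ⟨i, hiG, hxi⟩ := Finset.mem_biUnion.mp hx
      have hcode := congrFun (congrArg Prod.fst heq) ⟨i, hiG⟩
      have hdec := boolCode_inj _ _ _ _ (hB c1 h1 i hiG) (hB c2 h2 i hiG) hcode
      rcases Finset.mem_insert.mp hxi with h | h
      · rw [h]; exact hdec.1
      · rw [Finset.mem_singleton.mp h]; exact hdec.2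
    · exact congrFun (congrArg Prod.snd heq) ⟨x, hx⟩

private lemma exists_g (p : ℕ) (hp : p.Prime) (m : ℕ) (hm : p = 2 * m + 1)
    (W : Set (ZMod p)) (z : ZMod p) (hz : z ≠ 0)
    (B : Finset (ZMod p → Bool))
    (hB : ∀ c ∈ B, ¬ ∃ u : ZMod p, u ∉ W ∧ u - z ∉ W ∧ c u = true ∧ c (u - z) = false) :
    ∃ g : ℕ, m ≤ g + W.ncard ∧ 2 * g ≤ p ∧ B.card ≤ 3 ^ g * 2 ^ (p - 2 * g) := by
  classical
  haveI : Fact p.Prime := ⟨hp⟩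
  have hcast : ∀ s t : ℕ, s < p → t < p → ((s : ℕ) : ZMod p) * z = ((t : ℕ) : ZMod p) * z → s = t := by
    intro s t hs ht hst
    have h1 := mul_right_cancel₀ hz hst
    have h2 : ((s : ℕ) : ZMod p).val = s := ZMod.val_cast_of_lt hs
    have h3 : ((t : ℕ) : ZMod p).val = t := ZMod.val_cast_of_lt ht
    rw [← h2, ← h3, h1]
  set a : ℕ → ZMod p := fun i => ((2 * i + 1 : ℕ) : ZMod p) * z with ha
  set b : ℕ → ZMod p := fun i => ((2 * i : ℕ) : ZMod p) * z with hb
  have hsub : ∀ i : ℕ, a i - b i = z := by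
    intro i
    rw [ha, hb]
    push_cast
    ring
  set G : Finset ℕ := (Finset.range m).filter (fun i => a i ∉ W ∧ b i ∉ W) with hG
  have hlt : ∀ i ∈ Finset.range m, 2 * i < p ∧ 2 * i + 1 < p := by
    intro i hi
    have := Finset.mem_range.mp hi
    omega
  refine ⟨G.card, ?_, ?_, ?_⟩
  · -- m ≤ G.card + W.ncard
    have hWf : W.Finite := Set.toFinite _
    have hinj : ((Finset.range m).filter (fun i => ¬(a i ∉ W ∧ b i ∉ W))).card ≤ W.ncard := by
      rw [Set.ncard_eq_toFinset_card W hWf]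
      apply Finset.card_le_card_of_injOn (f := fun i => if b i ∈ W then b i else a i)
      · intro i hi
        rw [Finset.mem_coe, Finset.mem_filter] at hi
        have hi2 := hi.2
        push_neg at hi2
        by_cases hbi : b i ∈ W
        · simp only [hbi, if_true, Finset.mem_coe, Set.Finite.mem_toFinset]
        · simp only [hbi, if_false, Finset.mem_coe, Set.Finite.mem_toFinset]
          by_cases hai : a i ∈ W
          · exact hai
          · exact absurd (hi2 hai) hbi
      · intro i hi j hj hij
        rw [Finset.mem_coe, Finset.mem_filter] at hi hj
        obtain ⟨hi1, hi2⟩ := hlt i hi.1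
        obtain ⟨hj1, hj2⟩ := hlt j hj.1
        by_contra hne
        simp only at hij
        have : i = j := by
          split_ifs at hij with h1 h2 h2
          · have := hcast _ _ hi1 hj1 hij; omega
          · have := hcast _ _ hi1 hj2 hij; omega
          · have := hcast _ _ hi2 hj1 hij; omega
          · have := hcast _ _ hi2 hj2 hij; omega
        exact hne this
    have hsplit := Finset.card_filter_add_card_filter_not
      (s := Finset.range m) (p := fun i => a i ∉ W ∧ b i ∉ W)
    rw [Finset.card_range] at hsplit
    have hGc : G.card = ((Finset.range m).filter (fun i => a i ∉ W ∧ b i ∉ W)).card := rfl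
    omega
  · -- 2 * G.card ≤ p
    have : G.card ≤ m := le_trans (Finset.card_filter_le _ _) (le_of_eq (Finset.card_range m))
    omega
  · -- counting
    have hmain := card_pairs_le G a b
      (fun i _ => by
        intro hEq
        apply hz
        rw [← hsub i, hEq, sub_self])
      (fun i hi j hj hij => by
        rw [hG, Finset.mem_filter] at hi hj
        obtain ⟨hi1, hi2⟩ := hlt i hi.1
        obtain ⟨hj1, hj2⟩ := hlt j hj.1
        rw [Finset.disjoint_left]
        intro x hx1 hx2
        simp only [Finset.mem_insert, Finset.mem_singleton] at hx1 hx2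
        rcases hx1 with rfl | rfl <;> rcases hx2 with h | h
        · have := hcast _ _ hi2 hj2 h; omega
        · have := hcast _ _ hi2 hj1 h; omega
        · have := hcast _ _ hi1 hj2 h; omega
        · have := hcast _ _ hi1 hj1 h; omega)
      B
      (fun c hc i hi => by
        rw [hG, Finset.mem_filter] at hi
        rintro ⟨hc1, hc2⟩
        apply hB c hc
        refine ⟨a i, hi.2.1, ?_, hc1, ?_⟩
        · rw [show a i - z = b i by rw [← hsub i]; ring]
          exact hi.2.2
        · rw [show a i - z = b i by rw [← hsub i]; ring]
          exact hc2)
    rwa [ZMod.card] at hmain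

theorem exists_prime_compatible_pair_of_bound
    (p : ℕ) (hp : p.Prime) (hp2 : p ≠ 2) (W : Set (ZMod p)) (hW : W.Nonempty)
    (h : ((3 : ℝ) / 4) ^ (((p : ℝ) - 1) / 2 - (W.ncard : ℝ)) < 1 / (p : ℝ)) :
    ∃ U V : Set (ZMod p), PrimeCompatiblePair p U V ∧ W ⊆ U ∧ W ⊆ V := by
  classical
  haveI : Fact p.Prime := ⟨hp⟩
  obtain ⟨m, hm⟩ : ∃ m, p = 2 * m + 1 := by
    obtain ⟨m, hm⟩ := hp.odd_of_ne_two hp2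
    exact ⟨m, by omega⟩
  have hp3 : 3 ≤ p := by have := hp.two_le; omega
  have hppos : (0 : ℝ) < p := by positivity
  set w := W.ncard with hw
  set e : ℝ := ((p : ℝ) - 1) / 2 - w with he
  have hme : (m : ℝ) = ((p : ℝ) - 1) / 2 := by
    have : (p : ℝ) = 2 * m + 1 := by exact_mod_cast congrArg (Nat.cast : ℕ → ℝ) hm
    linarith
  set bad : ZMod p → Finset (ZMod p → Bool) := fun z =>
    Finset.univ.filter (fun c => ¬ ∃ u, u ∉ W ∧ u - z ∉ W ∧ c u = true ∧ c (u - z) = false)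
    with hbaddef
  have hbadcard : ∀ z : ZMod p, z ≠ 0 → ((bad z).card : ℝ) ≤ 2 ^ p * ((3 : ℝ) / 4) ^ e := by
    intro z hz
    obtain ⟨g, hg1, hg2, hg3⟩ := exists_g p hp m hm W z hz (bad z)
      (fun c hc => (Finset.mem_filter.mp hc).2)
    have hge : e ≤ (g : ℝ) := by
      rw [he, ← hme]
      have : (m : ℝ) ≤ (g : ℝ) + (w : ℝ) := by exact_mod_cast hg1
      linarith
    calc ((bad z).card : ℝ) ≤ ((3 ^ g * 2 ^ (p - 2 * g) : ℕ) : ℝ) := by exact_mod_cast hg3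
      _ = 2 ^ p * ((3 : ℝ) / 4) ^ g := by
          push_cast
          have h4 : ((2 : ℝ)) ^ (p - 2 * g) = 2 ^ p / 2 ^ (2 * g) := by
            rw [eq_div_iff (by positivity), ← pow_add, Nat.sub_add_cancel hg2]
          rw [h4, div_pow, show ((4 : ℝ)) ^ g = 2 ^ (2 * g) by rw [pow_mul]; norm_num]
          field_simp
      _ = 2 ^ p * ((3 : ℝ) / 4) ^ ((g : ℕ) : ℝ) := by rw [Real.rpow_natCast]
      _ ≤ 2 ^ p * ((3 : ℝ) / 4) ^ e := by
          apply mul_le_mul_of_nonneg_left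
            (Real.rpow_le_rpow_of_exponent_ge (by norm_num) (by norm_num) hge)
            (by positivity)
  set BadAll := (Finset.univ.erase (0 : ZMod p)).biUnion bad with hBadAll
  have hcardlt : BadAll.card < Fintype.card (ZMod p → Bool) := by
    have h1 : (BadAll.card : ℝ) ≤ ∑ z ∈ Finset.univ.erase (0 : ZMod p), ((bad z).card : ℝ) := by
      exact_mod_cast Finset.card_biUnion_le
    have h2 : ∑ z ∈ Finset.univ.erase (0 : ZMod p), ((bad z).card : ℝ)
        ≤ ((p : ℝ) - 1) * (2 ^ p * ((3 : ℝ) / 4) ^ e) := by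
      refine le_trans (Finset.sum_le_sum fun z hzmem =>
        hbadcard z (Finset.ne_of_mem_erase hzmem)) ?_
      rw [Finset.sum_const, Finset.card_erase_of_mem (Finset.mem_univ _), Finset.card_univ,
        ZMod.card, nsmul_eq_mul]
      have : ((p - 1 : ℕ) : ℝ) = (p : ℝ) - 1 := by
        have := hp.two_le; push_cast [Nat.cast_sub (by omega : 1 ≤ p)]; ring
      rw [this]
    have h3 : ((p : ℝ) - 1) * (2 ^ p * ((3 : ℝ) / 4) ^ e) < 2 ^ p := by
      have hlt1 : 2 ^ p * ((3 : ℝ) / 4) ^ e < 2 ^ p * (1 / p) :=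
        mul_lt_mul_of_pos_left h (by positivity)
      have hstep : ((p : ℝ) - 1) * (2 ^ p * ((3 : ℝ) / 4) ^ e)
          ≤ ((p : ℝ) - 1) * (2 ^ p * ((3 : ℝ) / 4) ^ e) := le_refl _
      have hp1 : (0 : ℝ) < (p : ℝ) - 1 := by
        have : (3 : ℝ) ≤ p := by exact_mod_cast hp3
        linarith
      calc ((p : ℝ) - 1) * (2 ^ p * ((3 : ℝ) / 4) ^ e)
          < ((p : ℝ) - 1) * (2 ^ p * (1 / p)) := mul_lt_mul_of_pos_left hlt1 hp1
        _ = 2 ^ p * (((p : ℝ) - 1) / p) := by field_simp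
        _ < 2 ^ p * 1 := by
            apply mul_lt_mul_of_pos_left _ (by positivity)
            rw [div_lt_one hppos]
            linarith
        _ = 2 ^ p := mul_one _
    have hcard2 : ((Fintype.card (ZMod p → Bool) : ℕ) : ℝ) = 2 ^ p := by
      rw [Fintype.card_fun, Fintype.card_bool, ZMod.card]
      push_cast
      ring
    have : (BadAll.card : ℝ) < ((Fintype.card (ZMod p → Bool) : ℕ) : ℝ) := by
      rw [hcard2]; exact lt_of_le_of_lt (h1.trans h2) h3
    exact_mod_cast this
  obtain ⟨c, hc⟩ : ∃ c : ZMod p → Bool, c ∉ BadAll := by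
    by_contra hcon
    push_neg at hcon
    have hsub : (Finset.univ : Finset (ZMod p → Bool)) ⊆ BadAll := fun c _ => hcon c
    have := Finset.card_le_card hsub
    rw [Finset.card_univ] at this
    omega
  have hgood : ∀ y : ZMod p, y ≠ 0 →
      ∃ u, u ∉ W ∧ u - y ∉ W ∧ c u = true ∧ c (u - y) = false := by
    intro y hy
    by_contra hbad2
    exact hc (Finset.mem_biUnion.mpr ⟨y, Finset.mem_erase.mpr ⟨hy, Finset.mem_univ y⟩,
      Finset.mem_filter.mpr ⟨Finset.mem_univ c, hbad2⟩⟩)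
  refine ⟨W ∪ {x | x ∉ W ∧ c x = true}, W ∪ {x | x ∉ W ∧ c x = false},
    ⟨hW.mono Set.subset_union_left, hW.mono Set.subset_union_left, ?_⟩,
    Set.subset_union_left, Set.subset_union_left⟩
  have hA : (W ∪ {x | x ∉ W ∧ c x = true}) \ (W ∪ {x | x ∉ W ∧ c x = false})
      = {x | x ∉ W ∧ c x = true} := by
    ext x
    by_cases hx : x ∈ W <;> simp [hx]
  have hB : (W ∪ {x | x ∉ W ∧ c x = false}) \ (W ∪ {x | x ∉ W ∧ c x = true})
      = {x | x ∉ W ∧ c x = false} := by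
    ext x
    by_cases hx : x ∈ W <;> simp [hx]
  rw [hA, hB]
  ext y
  simp only [Set.mem_sub, Set.mem_compl_iff, Set.mem_singleton_iff, Set.mem_setOf_eq]
  constructor
  · rintro ⟨u, ⟨hu1, hu2⟩, v, ⟨hv1, hv2⟩, rfl⟩ h0
    rw [sub_eq_zero] at h0
    rw [h0, hv2] at hu2
    exact Bool.false_ne_true hu2
  · intro hy
    obtain ⟨u, h1, h2, h3, h4⟩ := hgood y hy
    exact ⟨u, ⟨h1, h3⟩, u - y, ⟨h2, h4⟩, by ring⟩
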